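/- arXiv:math/0203157 — 9 statements merged into one kernel-verified Lean document; each statement's English description precedes it below -/
import Mathlib

section
/- Let p be a prime, let q ∈ Z_p with q ≠ 0 and q ≠ 1, and let X be the affine quandle (Z_p, q), i.e., Z/pZ with operation x ▷ y = (1−q)x + qy. Let H be any group. Then every quandle nonabelian 2-cocycle β : X × X → H is cohomologous to the trivial cocycle: there exists γ : X → H such that β(x,y) = γ(x ▷ y)^{-1} γ(y) for all x, y ∈ X. In other words, the nonabelian quandle cohomology set H^2_Q(X, H) is trivial. -/
/-- A binary operation is a rack operation if all left translations are bijective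
and the operation is left self-distributive. -/
def IsRack {X : Type*} (op : X → X → X) : Prop :=
  (∀ x, Function.Bijective (op x)) ∧
  ∀ x y z, op x (op y z) = op (op x y) (op x z)

/-- A quandle is a rack in which every element is idempotent. -/
def IsQuandle {X : Type*} (op : X → X → X) : Prop :=
  IsRack op ∧ ∀ x, op x x = x

/-- A rack is decomposable if it splits as a disjoint union of two nonempty
invariant subsets. -/
def IsDecomposable {X : Type*} (op : X → X → X) : Prop :=
  ∃ Y Z : Set X, Y.Nonempty ∧ Z.Nonempty ∧ Disjoint Y Z ∧ Y ∪ Z = Set.univ ∧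
    (∀ x, op x '' Y = Y) ∧ (∀ x, op x '' Z = Z)

/-- Two binary operations are isomorphic as racks if there is a bijection
intertwining them. -/
def IsRackIso {X Y : Type*} (opX : X → X → X) (opY : Y → Y → Y) : Prop :=
  ∃ f : X ≃ Y, ∀ a b, f (opX a b) = opY (f a) (f b)

/-- The affine (Alexander) quandle operation attached to an automorphism `g`
of an abelian group `A` : `x ▷ y = (x - g x) + g y`. -/
def affineOp {A : Type*} [AddCommGroup A] (g : A ≃+ A) : A → A → A :=
  fun x y => (x - g x) + g y

/-! ### Auxiliary machinery

We prove the theorem through the following chain of reductions.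

Given the cocycle `β` we build, inside the "wreath-type" group
`W p H = (ZMod p → H) ⋊ ZMod p`, a family of elements `τ t` (the lifts of the
translations of the underlying affine quandle).  The cocycle condition implies
the exchange law `τ u * τ v = τ ((1-q)u+v) * τ (qu)`, and from this single
law (plus `τ 0 = 1`) one can prove abstractly, in any group, that `τ` is
additive: `τ u * τ v = τ (u+v)`.  Evaluating the resulting product formula at
the basepoint and using `β x x = 1` produces the trivializing function `γ`. -/

namespace QuandleH2AuxNS

/-- Skew product `(ZMod p → H) ⋊ ZMod p`: pairs `(t, f)` acting as
`(k, y) ↦ (f y * k, y + t)`. -/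
@[ext] structure W (p : ℕ) (H : Type*) where
  t : ZMod p
  f : ZMod p → H

variable {p : ℕ} {H : Type*} [Group H]

instance : Mul (W p H) := ⟨fun a b => ⟨a.t + b.t, fun y => a.f (y + b.t) * b.f y⟩⟩
instance : One (W p H) := ⟨⟨0, fun _ => 1⟩⟩
instance : Inv (W p H) := ⟨fun a => ⟨-a.t, fun y => (a.f (y - a.t))⁻¹⟩⟩

@[simp] lemma mul_t (a b : W p H) : (a * b).t = a.t + b.t := rfl
@[simp] lemma mul_f (a b : W p H) (y : ZMod p) : (a * b).f y = a.f (y + b.t) * b.f y := rfl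
@[simp] lemma one_t : (1 : W p H).t = 0 := rfl
@[simp] lemma one_f (y : ZMod p) : (1 : W p H).f y = 1 := rfl
@[simp] lemma inv_t (a : W p H) : (a⁻¹).t = -a.t := rfl
@[simp] lemma inv_f (a : W p H) (y : ZMod p) : (a⁻¹).f y = (a.f (y - a.t))⁻¹ := rfl

instance : Group (W p H) where
  mul_assoc a b c := by
    ext y
    · simp [add_assoc]
    · simp only [mul_f, mul_t]
      rw [show y + (b.t + c.t) = y + c.t + b.t by ring]
      rw [mul_assoc]
  one_mul a := by
    ext y
    · simp
    · simp
  mul_one a := by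
    ext y
    · simp
    · simp
  inv_mul_cancel a := by
    ext y
    · simp
    · simp

end QuandleH2AuxNS

namespace QuandleH2AuxNS

/-- The multiplication defect of the family `τ`. -/
def cc {p : ℕ} {G : Type*} [Group G] (τ : ZMod p → G) (u v : ZMod p) : G :=
  τ u * τ v * (τ (u + v))⁻¹

/-- Iterated products of `cc τ · 1`. -/
def hh {p : ℕ} {G : Type*} [Group G] (τ : ZMod p → G) : ℕ → G
  | 0 => 1
  | n + 1 => hh τ n * cc τ (n : ZMod p) 1

/-- **Abstract additivity.** If `τ : ZMod p → G` satisfies `τ 0 = 1` and the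
exchange law coming from the affine quandle cocycle condition, then `τ` is
additive. -/
theorem tau_additive {p : ℕ} [NeZero p] {G : Type*} [Group G]
    (q e : ZMod p) (he : (1 - q) * e = 1)
    (τ : ZMod p → G) (h0 : τ 0 = 1)
    (hT : ∀ u v, τ u * τ v = τ ((1 - q) * u + v) * τ (q * u)) :
    ∀ u v, τ u * τ v = τ (u + v) := by
  -- conjugation translates "differences"
  have A1 : ∀ u a b, τ u * (τ a * (τ b)⁻¹) * (τ u)⁻¹
      = τ (a + (1 - q) * u) * (τ (b + (1 - q) * u))⁻¹ := by
    intro u a b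
    calc τ u * (τ a * (τ b)⁻¹) * (τ u)⁻¹
        = (τ u * τ a) * (τ u * τ b)⁻¹ := by group
      _ = (τ ((1 - q) * u + a) * τ (q * u)) * (τ ((1 - q) * u + b) * τ (q * u))⁻¹ := by
          rw [hT u a, hT u b]
      _ = τ ((1 - q) * u + a) * (τ ((1 - q) * u + b))⁻¹ := by group
      _ = τ (a + (1 - q) * u) * (τ (b + (1 - q) * u))⁻¹ := by
          rw [add_comm ((1 - q) * u) a, add_comm ((1 - q) * u) b]
  have A1inv : ∀ u a b, (τ u)⁻¹ * (τ a * (τ b)⁻¹) * τ u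
      = τ (a - (1 - q) * u) * (τ (b - (1 - q) * u))⁻¹ := by
    intro u a b
    have h := A1 u (a - (1 - q) * u) (b - (1 - q) * u)
    rw [sub_add_cancel, sub_add_cancel] at h
    rw [← h]; group
  -- the defects `cc` commute with every `τ w`
  have comm_tau : ∀ u v w, Commute (cc τ u v) (τ w) := by
    intro u v w
    have key : cc τ u v * τ w * (cc τ u v)⁻¹ = τ w := by
      calc cc τ u v * τ w * (cc τ u v)⁻¹
          = τ u * (τ v * ((τ (u + v))⁻¹ * (τ w * (τ 0)⁻¹) * τ (u + v)) * (τ v)⁻¹) * (τ u)⁻¹ := by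
            unfold cc; rw [h0]; group
        _ = τ u * (τ v * (τ (w - (1 - q) * (u + v)) * (τ (0 - (1 - q) * (u + v)))⁻¹) * (τ v)⁻¹)
              * (τ u)⁻¹ := by rw [A1inv (u + v) w 0]
        _ = τ u * (τ (w - (1 - q) * (u + v) + (1 - q) * v)
              * (τ (0 - (1 - q) * (u + v) + (1 - q) * v))⁻¹) * (τ u)⁻¹ := by
            rw [A1 v (w - (1 - q) * (u + v)) (0 - (1 - q) * (u + v))]
        _ = τ u * (τ (w - (1 - q) * u) * (τ (0 - (1 - q) * u))⁻¹) * (τ u)⁻¹ := by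
            rw [show w - (1 - q) * (u + v) + (1 - q) * v = w - (1 - q) * u by ring,
              show (0 : ZMod p) - (1 - q) * (u + v) + (1 - q) * v = 0 - (1 - q) * u by ring]
        _ = τ (w - (1 - q) * u + (1 - q) * u) * (τ (0 - (1 - q) * u + (1 - q) * u))⁻¹ :=
            A1 u (w - (1 - q) * u) (0 - (1 - q) * u)
        _ = τ w * (τ 0)⁻¹ := by
            rw [show w - (1 - q) * u + (1 - q) * u = w by ring,
              show (0 : ZMod p) - (1 - q) * u + (1 - q) * u = 0 by ring]
        _ = τ w := by rw [h0]; group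
    have := congrArg (· * cc τ u v) key
    simpa [mul_assoc, Commute, SemiconjBy] using this
  have comm_cc : ∀ u v a b, Commute (cc τ u v) (cc τ a b) := by
    intro u v a b
    exact ((comm_tau u v a).mul_right (comm_tau u v b)).mul_right
      (comm_tau u v (a + b)).inv_right
  -- cocycle identity for the defects
  have A5 : ∀ u v w, cc τ u v * cc τ (u + v) w = cc τ v w * cc τ u (v + w) := by
    intro u v w
    have h1 : cc τ u v * cc τ (u + v) w = τ u * τ v * τ w * (τ (u + v + w))⁻¹ := by
      unfold cc; group
    have h2 : cc τ v w * cc τ u (v + w) = τ u * τ v * τ w * (τ (u + v + w))⁻¹ := by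
      have hcomm := (comm_tau v w u).symm.eq
      unfold cc
      calc τ v * τ w * (τ (v + w))⁻¹ * (τ u * τ (v + w) * (τ (u + (v + w)))⁻¹)
          = (τ v * τ w * (τ (v + w))⁻¹) * τ u * τ (v + w) * (τ (u + (v + w)))⁻¹ := by group
        _ = τ u * (τ v * τ w * (τ (v + w))⁻¹) * τ (v + w) * (τ (u + (v + w)))⁻¹ := by
            rw [show (τ v * τ w * (τ (v + w))⁻¹) * τ u = τ u * (τ v * τ w * (τ (v + w))⁻¹) from
              (comm_tau v w u).eq]
        _ = τ u * τ v * τ w * (τ (u + (v + w)))⁻¹ := by group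
        _ = τ u * τ v * τ w * (τ (u + v + w))⁻¹ := by rw [add_assoc]
    rw [h1, h2]
  -- Ψ-invariance of the defects
  have A6 : ∀ u v, cc τ u v = cc τ ((1 - q) * u + v) (q * u) := by
    intro u v
    unfold cc
    rw [hT u v, show (1 - q) * u + v + q * u = u + v by ring]
  -- commutation with the `hh` products
  have comm_hh : ∀ u v n, Commute (cc τ u v) (hh τ n) := by
    intro u v n
    induction n with
    | zero => exact Commute.one_right _
    | succ n ih => exact ih.mul_right (comm_cc u v _ _)
  -- parametrization: `cc` on natural-number casts
  have key : ∀ m n : ℕ, cc τ (m : ZMod p) (n : ZMod p) * hh τ n * hh τ m = hh τ (m + n) := by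
    intro m
    intro n
    induction n with
    | zero =>
      have : cc τ (m : ZMod p) ((0 : ℕ) : ZMod p) = 1 := by
        unfold cc
        push_cast
        rw [add_zero, h0]; group
      rw [this]; simp [hh]
    | succ n ih =>
      have hcast : ((n + 1 : ℕ) : ZMod p) = (n : ZMod p) + 1 := by push_cast; ring
      have hA5 := A5 (m : ZMod p) (n : ZMod p) 1
      -- cc m (n+1) = (cc n 1)⁻¹ * (cc m n * cc (m+n) 1)
      have hstep : cc τ (m : ZMod p) ((n : ZMod p) + 1)
          = (cc τ (n : ZMod p) 1)⁻¹ * (cc τ (m : ZMod p) (n : ZMod p)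
              * cc τ ((m : ZMod p) + (n : ZMod p)) 1) := by
        rw [eq_inv_mul_iff_mul_eq]; exact hA5.symm
      have hmn : ((m + n : ℕ) : ZMod p) = (m : ZMod p) + (n : ZMod p) := by push_cast; ring
      calc cc τ (m : ZMod p) ((n + 1 : ℕ) : ZMod p) * hh τ (n + 1) * hh τ m
          = (cc τ (n : ZMod p) 1)⁻¹ * (cc τ (m : ZMod p) (n : ZMod p)
              * cc τ ((m : ZMod p) + (n : ZMod p)) 1) * (hh τ n * cc τ (n : ZMod p) 1)
              * hh τ m := by rw [hcast, hstep]; rfl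
        _ = cc τ (m : ZMod p) (n : ZMod p) * cc τ ((m : ZMod p) + (n : ZMod p)) 1
              * hh τ n * hh τ m := by
            have c1 : Commute ((cc τ (n : ZMod p) 1)⁻¹)
                (cc τ (m : ZMod p) (n : ZMod p) * cc τ ((m : ZMod p) + (n : ZMod p)) 1) :=
              ((comm_cc _ _ _ _).inv_left.mul_right (comm_cc _ _ _ _).inv_left)
            have c2 : Commute ((cc τ (n : ZMod p) 1)⁻¹) (hh τ n) :=
              (comm_hh _ _ n).inv_left
            calc (cc τ (n : ZMod p) 1)⁻¹ * (cc τ (m : ZMod p) (n : ZMod p)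
                  * cc τ ((m : ZMod p) + (n : ZMod p)) 1) * (hh τ n * cc τ (n : ZMod p) 1)
                  * hh τ m
                = (cc τ (m : ZMod p) (n : ZMod p) * cc τ ((m : ZMod p) + (n : ZMod p)) 1)
                  * ((cc τ (n : ZMod p) 1)⁻¹ * hh τ n) * cc τ (n : ZMod p) 1 * hh τ m := by
                  rw [c1.eq]; group
              _ = (cc τ (m : ZMod p) (n : ZMod p) * cc τ ((m : ZMod p) + (n : ZMod p)) 1)
                  * (hh τ n * (cc τ (n : ZMod p) 1)⁻¹) * cc τ (n : ZMod p) 1 * hh τ m := by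
                  rw [c2.eq]
              _ = cc τ (m : ZMod p) (n : ZMod p) * cc τ ((m : ZMod p) + (n : ZMod p)) 1
                  * hh τ n * hh τ m := by group
        _ = cc τ ((m : ZMod p) + (n : ZMod p)) 1
              * (cc τ (m : ZMod p) (n : ZMod p) * hh τ n * hh τ m) := by
            rw [(comm_cc (m : ZMod p) (n : ZMod p) ((m : ZMod p) + (n : ZMod p)) 1).eq]; group
        _ = cc τ ((m : ZMod p) + (n : ZMod p)) 1 * hh τ (m + n) := by rw [ih]
        _ = hh τ (m + n) * cc τ ((m + n : ℕ) : ZMod p) 1 := by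
            rw [hmn, ((comm_hh _ _ (m + n)).symm.eq)]
        _ = hh τ (m + n + 1) := rfl
  -- symmetry of the defects
  have csymm : ∀ a b : ZMod p, cc τ a b = cc τ b a := by
    intro a b
    have hva : ((a.val : ℕ) : ZMod p) = a := ZMod.natCast_rightInverse a
    have hvb : ((b.val : ℕ) : ZMod p) = b := ZMod.natCast_rightInverse b
    have h1 := key a.val b.val
    have h2 := key b.val a.val
    rw [Nat.add_comm b.val a.val] at h2
    rw [hva, hvb] at h1
    rw [hva, hvb] at h2
    -- h1 : cc a b * hh b.val * hh a.val = hh (a.val+b.val) = cc b a * hh a.val * hh b.val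
    have h3 : cc τ a b * hh τ b.val * hh τ a.val = cc τ b a * hh τ a.val * hh τ b.val := by
      rw [h1, h2]
    -- move `hh`'s to the same side using commutation of hh's
    have hcomm2 : ∀ m n : ℕ, Commute (hh τ m) (hh τ n) := by
      intro m n
      induction m with
      | zero => exact Commute.one_left _
      | succ k ihk => exact Commute.mul_left ihk (comm_hh _ _ _)
    have hcomm : Commute (hh τ a.val) (hh τ b.val) := hcomm2 _ _
    have h4 : cc τ a b * (hh τ b.val * hh τ a.val) = cc τ b a * (hh τ b.val * hh τ a.val) := by
      calc cc τ a b * (hh τ b.val * hh τ a.val)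
          = cc τ a b * hh τ b.val * hh τ a.val := by group
        _ = cc τ b a * hh τ a.val * hh τ b.val := h3
        _ = cc τ b a * (hh τ a.val * hh τ b.val) := by group
        _ = cc τ b a * (hh τ b.val * hh τ a.val) := by rw [hcomm.eq]
    exact mul_right_cancel h4
  -- the "twisted symmetry" computation: the commutator of τ a and τ b
  have sw : ∀ a b : ZMod p, cc τ a b * (cc τ b a)⁻¹ = (cc τ b ((1 - q) * a))⁻¹ := by
    intro a b
    have hconj : τ a * τ b * (τ a)⁻¹ = τ (b + (1 - q) * a) * (τ ((1 - q) * a))⁻¹ := by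
      have h := A1 a b 0
      rw [h0] at h
      calc τ a * τ b * (τ a)⁻¹ = τ a * (τ b * (1 : G)⁻¹) * (τ a)⁻¹ := by group
        _ = τ (b + (1 - q) * a) * (τ (0 + (1 - q) * a))⁻¹ := h
        _ = τ (b + (1 - q) * a) * (τ ((1 - q) * a))⁻¹ := by rw [zero_add]
    calc cc τ a b * (cc τ b a)⁻¹
        = τ a * τ b * (τ (a + b))⁻¹ * (τ (b + a) * (τ a)⁻¹ * (τ b)⁻¹) := by
          unfold cc; group
      _ = τ a * τ b * (τ (a + b))⁻¹ * (τ (a + b) * (τ a)⁻¹ * (τ b)⁻¹) := by rw [add_comm b a]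
      _ = (τ a * τ b * (τ a)⁻¹) * (τ b)⁻¹ := by group
      _ = τ (b + (1 - q) * a) * (τ ((1 - q) * a))⁻¹ * (τ b)⁻¹ := by rw [hconj]
      _ = (τ b * τ ((1 - q) * a) * (τ (b + (1 - q) * a))⁻¹)⁻¹ := by group
      _ = (cc τ b ((1 - q) * a))⁻¹ := rfl
  -- hence all defects vanish
  have ctriv : ∀ u v, cc τ u v = 1 := by
    have base : ∀ a b : ZMod p, cc τ b ((1 - q) * a) = 1 := by
      intro a b
      have h := sw a b
      rw [csymm a b] at h
      have : ((1 : G)) = (cc τ b ((1 - q) * a))⁻¹ := by rw [← h]; group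
      rw [inv_eq_iff_eq_inv.mp this.symm]; group
    intro u v
    have := base (e * v) u
    rwa [show (1 - q) * (e * v) = v by rw [← mul_assoc, he, one_mul]] at this
  intro u v
  have h := ctriv u v
  unfold cc at h
  calc τ u * τ v = τ u * τ v * (τ (u + v))⁻¹ * τ (u + v) := by group
    _ = 1 * τ (u + v) := by rw [h]
    _ = τ (u + v) := one_mul _

/-- The concrete construction: all of the theorem except the final bookkeeping. -/
theorem main_core {p : ℕ} [NeZero p] {H : Type*} [Group H]
    (q e q' : ZMod p) (he : (1 - q) * e = 1) (hq : q * q' = 1)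
    (β : ZMod p → ZMod p → H)
    (hcoc : ∀ x y z : ZMod p,
      β x ((1 - q) * y + q * z) * β y z
        = β ((1 - q) * x + q * y) ((1 - q) * x + q * z) * β x z)
    (hquandle : ∀ x : ZMod p, β x x = 1) :
    ∀ x y : ZMod p, β x y = β (((1 - q) * x + q * y) * e) 0 * (β (y * e) 0)⁻¹ := by
  -- the translation lifts
  set τ : ZMod p → W p H :=
    fun t => ⟨t, fun y => β (t * e) (y * q') * (β 0 (y * q'))⁻¹⟩ with hτ
  have h0 : τ 0 = 1 := by
    ext y
    · rfl
    · show β (0 * e) (y * q') * (β 0 (y * q'))⁻¹ = 1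
      rw [zero_mul]; group
  -- the exchange law
  have hT : ∀ u v, τ u * τ v = τ ((1 - q) * u + v) * τ (q * u) := by
    intro u v
    ext y
    · show u + v = ((1 - q) * u + v) + q * u
      ring
    · show β (u * e) ((y + v) * q') * (β 0 ((y + v) * q'))⁻¹
          * (β (v * e) (y * q') * (β 0 (y * q'))⁻¹)
        = β (((1 - q) * u + v) * e) ((y + q * u) * q') * (β 0 ((y + q * u) * q'))⁻¹
          * (β ((q * u) * e) (y * q') * (β 0 (y * q'))⁻¹)
      -- change of variables
      set x := u * e with hx
      set w := v * e * q' with hw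
      set Z := y * q' * q' with hZ
      have a2 : (y + v) * q' = (1 - q) * w + q * Z := by
        rw [hw, hZ]; linear_combination (-(v * q')) * he + (-(y * q')) * hq
      have a3 : v * e = q * w := by
        rw [hw]; linear_combination (-(v * e)) * hq
      have a4 : y * q' = q * Z := by
        rw [hZ]; linear_combination (-(y * q')) * hq
      have a5 : ((1 - q) * u + v) * e = (1 - q) * x + q * w := by
        rw [hx, hw]; linear_combination (-(v * e)) * hq
      have a6 : (y + q * u) * q' = (1 - q) * x + q * Z := by
        rw [hx, hZ]; linear_combination (u - y * q') * hq + (-u) * he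
      have a7 : (q * u) * e = q * x := by rw [hx]; ring
      rw [a2, a3, a4, a5, a6, a7]
      -- instances of the cocycle condition
      have h0w : β 0 ((1 - q) * w + q * Z) * β w Z = β (q * w) (q * Z) * β 0 Z := by
        have h := hcoc 0 w Z
        rwa [show (1 - q) * 0 + q * w = q * w by ring, show (1 - q) * 0 + q * Z = q * Z by ring]
          at h
      have h0x : β 0 ((1 - q) * x + q * Z) * β x Z = β (q * x) (q * Z) * β 0 Z := by
        have h := hcoc 0 x Z
        rwa [show (1 - q) * 0 + q * x = q * x by ring, show (1 - q) * 0 + q * Z = q * Z by ring]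
          at h
      have e1 : β (q * w) (q * Z) = β 0 ((1 - q) * w + q * Z) * β w Z * (β 0 Z)⁻¹ := by
        rw [eq_mul_inv_iff_mul_eq]; exact h0w.symm
      have e2 : β (q * x) (q * Z) = β 0 ((1 - q) * x + q * Z) * β x Z * (β 0 Z)⁻¹ := by
        rw [eq_mul_inv_iff_mul_eq]; exact h0x.symm
      rw [e1, e2]
      have main := hcoc x w Z
      calc β x ((1 - q) * w + q * Z) * (β 0 ((1 - q) * w + q * Z))⁻¹
            * (β 0 ((1 - q) * w + q * Z) * β w Z * (β 0 Z)⁻¹ * (β 0 (q * Z))⁻¹)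
          = (β x ((1 - q) * w + q * Z) * β w Z) * ((β 0 Z)⁻¹ * (β 0 (q * Z))⁻¹) := by group
        _ = (β ((1 - q) * x + q * w) ((1 - q) * x + q * Z) * β x Z)
            * ((β 0 Z)⁻¹ * (β 0 (q * Z))⁻¹) := by rw [main]
        _ = β ((1 - q) * x + q * w) ((1 - q) * x + q * Z) * (β 0 ((1 - q) * x + q * Z))⁻¹
            * (β 0 ((1 - q) * x + q * Z) * β x Z * (β 0 Z)⁻¹ * (β 0 (q * Z))⁻¹) := by group
  -- additivity
  have hadd := tau_additive q e he τ h0 hT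
  -- basepoint values
  have hβ00 : β 0 0 = 1 := hquandle 0
  have fib0 : ∀ s : ZMod p, (τ s).f 0 = β (s * e) 0 := by
    intro s
    show β (s * e) (0 * q') * (β 0 (0 * q'))⁻¹ = β (s * e) 0
    rw [zero_mul, hβ00]; group
  -- the product formula evaluated at the basepoint
  have fib : ∀ t y : ZMod p, (τ t).f y = β ((t + y) * e) 0 * (β (y * e) 0)⁻¹ := by
    intro t y
    have h := hadd t y
    have h2 : (τ (t + y)).f 0 = ((τ t) * (τ y)).f 0 := by rw [h]
    rw [mul_f, fib0, zero_add] at h2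
    -- h2 : β ((t+y)*e) 0 = (τ t).f (τ y).t ... careful: (τ y).t = y
    have hty : (τ y).t = y := rfl
    rw [hty, fib0] at h2
    -- h2 : β ((t+y)*e) 0 = (τ t).f y * β (y*e) 0
    rw [h2]; group
  -- main identity: β x z * (β 0 z)⁻¹ = ...
  have main : ∀ x z : ZMod p,
      β x z * (β 0 z)⁻¹ = β (((1 - q) * x + q * z) * e) 0 * (β ((q * z) * e) 0)⁻¹ := by
    intro x z
    have h := fib ((1 - q) * x) (q * z)
    have hval : ((1 - q) * x) * e = x := by
      rw [show (1 - q) * x * e = ((1 - q) * e) * x by ring, he, one_mul]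
    have harg : (q * z) * q' = z := by
      rw [show q * z * q' = (q * q') * z by ring, hq, one_mul]
    show β x z * (β 0 z)⁻¹ = β (((1 - q) * x + q * z) * e) 0 * (β ((q * z) * e) 0)⁻¹
    calc β x z * (β 0 z)⁻¹
        = β (((1 - q) * x) * e) ((q * z) * q') * (β 0 ((q * z) * q'))⁻¹ := by
          rw [hval, harg]
      _ = (τ ((1 - q) * x)).f (q * z) := rfl
      _ = β (((1 - q) * x + q * z) * e) 0 * (β ((q * z) * e) 0)⁻¹ := h
  have aux : ∀ z : ZMod p, (β 0 z)⁻¹ = β (z * e) 0 * (β ((q * z) * e) 0)⁻¹ := by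
    intro z
    have h := main z z
    rw [hquandle z, one_mul, show (1 - q) * z + q * z = z by ring] at h
    exact h
  intro x y
  have h1 := main x y
  have h2 := aux y
  calc β x y = β x y * (β 0 y)⁻¹ * ((β 0 y)⁻¹)⁻¹ := by group
    _ = β (((1 - q) * x + q * y) * e) 0 * (β ((q * y) * e) 0)⁻¹
        * (β (y * e) 0 * (β ((q * y) * e) 0)⁻¹)⁻¹ := by rw [h1, h2]
    _ = β (((1 - q) * x + q * y) * e) 0 * (β (y * e) 0)⁻¹ := by group

end QuandleH2AuxNS

/-- Let `X = (Z_p, q)` (`q ≠ 0, 1`) be the affine quandle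
`x ▷ y = (1-q)x + qy`. Every nonabelian quandle 2-cocycle with values in any
group `H` is cohomologous to the trivial one: `H²_Q(X, H)` is trivial. -/
theorem quandle_nonabelian_H2_of_affine_Zp_trivial
    (p : ℕ) (hp : p.Prime) (q : ZMod p) (hq0 : q ≠ 0) (hq1 : q ≠ 1)
    (H : Type) [Group H] (β : ZMod p → ZMod p → H)
    (hcoc : ∀ x y z : ZMod p,
      β x ((1 - q) * y + q * z) * β y z
        = β ((1 - q) * x + q * y) ((1 - q) * x + q * z) * β x z)
    (hquandle : ∀ x : ZMod p, β x x = 1) :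
    ∃ γ : ZMod p → H, ∀ x y : ZMod p,
      β x y = (γ ((1 - q) * x + q * y))⁻¹ * γ y := by
  haveI : Fact p.Prime := ⟨hp⟩
  haveI : NeZero p := ⟨hp.ne_zero⟩
  have h1q : (1 : ZMod p) - q ≠ 0 := sub_ne_zero.mpr (Ne.symm hq1)
  have he : (1 - q) * (1 - q)⁻¹ = 1 := mul_inv_cancel₀ h1q
  have hq : q * q⁻¹ = 1 := mul_inv_cancel₀ hq0
  have key := QuandleH2AuxNS.main_core q (1 - q)⁻¹ q⁻¹ he hq β hcoc hquandle
  refine ⟨fun w => (β (w * (1 - q)⁻¹) 0)⁻¹, fun x y => ?_⟩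
  rw [key x y, inv_inv]
end

section
/- Let p be a prime, let q ∈ Z_p with q ≠ 0 and q ≠ 1, and let X be the affine quandle (Z_p, q) with operation x ▷ y = (1−q)x + qy. Let H be a group and let β : X × X → H be a quandle nonabelian 2-cocycle (so β(x, y ▷ z) β(y, z) = β(x ▷ y, x ▷ z) β(x, z) and β(x,x) = 1 for all x, y, z). If moreover β(x, 0) = 1 for all x ∈ X, then β is identically 1, i.e., β(x, y) = 1 for all x, y ∈ X. -/
/-- For the affine quandle `(Z_p, q)` (`q ≠ 0, 1`), a nonabelian
quandle 2-cocycle `β` with values in a group `H` satisfying `β(x, 0) = 1` for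
all `x` is identically `1`. -/
theorem quandle_cocycle_normalized_at_zero_is_trivial
    (p : ℕ) (hp : p.Prime) (q : ZMod p) (hq0 : q ≠ 0) (hq1 : q ≠ 1)
    (H : Type) [Group H] (β : ZMod p → ZMod p → H)
    (hcoc : ∀ x y z : ZMod p,
      β x ((1 - q) * y + q * z) * β y z
        = β ((1 - q) * x + q * y) ((1 - q) * x + q * z) * β x z)
    (hquandle : ∀ x : ZMod p, β x x = 1)
    (hzero : ∀ x : ZMod p, β x 0 = 1) :
    ∀ x y : ZMod p, β x y = 1 := by

  haveI : Fact p.Prime := ⟨hp⟩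
  haveI : NeZero p := ⟨hp.ne_zero⟩
  have hτ : (1 - q) ≠ 0 := sub_ne_zero.mpr (fun h => hq1 h.symm)
  -- R2 : specialization of the cocycle at z = 0
  have R2 : ∀ x y : ZMod p, β x ((1 - q) * y) = β ((1 - q) * x + q * y) ((1 - q) * x) := by
    intro x y
    have h := hcoc x y 0
    simpa [hzero] using h
  -- key : two applications of R2
  have key : ∀ Y Z : ZMod p,
      β Y ((1 - q) * Y + Z) = β (Y + q * Z) ((1 - q) * Y + q * Z) := by
    intro Y Z
    have h1 := R2 Y (Y + Z / (1 - q))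
    have e0 : (1 - q) * (Y + Z / (1 - q)) = (1 - q) * Y + Z := by
      rw [mul_add, mul_comm ((1:ZMod p) - q) (Z / (1 - q)), div_mul_cancel₀ Z hτ]
    rw [e0] at h1
    have h2 := R2 ((1 - q) * Y + q * (Y + Z / (1 - q))) Y
    rw [h2] at h1
    have e1 : (1 - q) * ((1 - q) * Y + q * (Y + Z / (1 - q))) + q * Y = Y + q * Z := by
      field_simp
      ring
    have e2 : (1 - q) * ((1 - q) * Y + q * (Y + Z / (1 - q))) = (1 - q) * Y + q * Z := by
      field_simp
      ring
    rw [e1, e2] at h1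
    exact h1
  -- shift invariance
  have shift : ∀ Y Z : ZMod p, β (Y + Z) Z = β Y Z := by
    intro Y Z
    have h := hcoc Y (Y + Z) Z
    have e3 : (1 - q) * (Y + Z) + q * Z = (1 - q) * Y + Z := by ring
    have e4 : (1 - q) * Y + q * (Y + Z) = Y + q * Z := by ring
    rw [e3, e4] at h
    rw [← key Y Z] at h
    exact mul_left_cancel h
  -- iterated shift
  have shift_n : ∀ (n : ℕ) (Y Z : ZMod p), β (Y + (n : ZMod p) * Z) Z = β Y Z := by
    intro n
    induction n with
    | zero => intro Y Z; simp
    | succ k ih =>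
      intro Y Z
      have e : Y + ((k + 1 : ℕ) : ZMod p) * Z = (Y + (k : ZMod p) * Z) + Z := by
        push_cast
        ring
      rw [e]
      rw [shift (Y + (k : ZMod p) * Z) Z]
      exact ih Y Z
  -- the zero row is trivial
  have row0 : ∀ w : ZMod p, β 0 w = 1 := by
    intro w
    have h := hcoc 0 (w / (1 - q)) 0
    simp only [hzero, mul_zero, mul_one, add_zero, zero_add] at h
    rw [mul_comm ((1:ZMod p) - q) (w / (1 - q)), div_mul_cancel₀ w hτ] at h
    simpa using h
  intro x y
  rcases eq_or_ne y 0 with rfl | hy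
  · exact hzero x
  · have hval := ZMod.natCast_rightInverse (n := p) ((-x) / y)
    have h := shift_n ((-x) / y).val x y
    rw [hval] at h
    rw [div_mul_cancel₀ (-x) hy] at h
    rw [add_neg_cancel] at h
    rw [← h]
    exact row0 y
end

section
/- Let A be an abelian group and g an automorphism of A, and let (A, g) be the affine quandle with operation x ▷ y = (x − g(x)) + g(y). Then (A, g) is indecomposable if and only if the map 1 − g : A → A, x ↦ x − g(x), is surjective. -/
/-- The affine quandle `(A, g)` is indecomposable if and only if
`1 - g : A → A` is surjective. -/
theorem affine_quandle_indecomposable_iff_one_sub_surjective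
    (A : Type) [AddCommGroup A] (g : A ≃+ A) :
    ¬ IsDecomposable (affineOp g) ↔ Function.Surjective (fun x : A => x - g x) := by
  set S : Set A := Set.range (fun x : A => x - g x) with hSdef
  have hsub : ∀ a ∈ S, ∀ b ∈ S, a - b ∈ S := by
    rintro _ ⟨x, rfl⟩ _ ⟨y, rfl⟩
    exact ⟨x - y, by simp [map_sub]; abel⟩
  have hadd : ∀ a ∈ S, ∀ b ∈ S, a + b ∈ S := by
    rintro _ ⟨x, rfl⟩ _ ⟨y, rfl⟩
    exact ⟨x + y, by simp [map_add]; abel⟩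
  have hg : ∀ a ∈ S, g a ∈ S := by
    rintro _ ⟨x, rfl⟩
    exact ⟨g x, by simp [map_sub]⟩
  have hginv : ∀ a ∈ S, g.symm a ∈ S := by
    rintro _ ⟨x, rfl⟩
    exact ⟨g.symm x, by simp [map_sub]⟩
  have hzero : (0 : A) ∈ S := ⟨0, by simp⟩
  have hbij : ∀ x : A, Function.Bijective (affineOp g x) := by
    intro x
    have : affineOp g x = (fun y => (x - g x) + y) ∘ g := by
      funext y; rfl
    rw [this]
    exact (Equiv.addLeft (x - g x)).bijective.comp g.bijective
  constructor
  · intro hnd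
    by_contra hs
    apply hnd
    unfold Function.Surjective at hs; push_neg at hs
    obtain ⟨a, ha⟩ := hs
    have haS : a ∉ S := by rintro ⟨x, rfl⟩; exact ha x rfl
    -- invariance of S
    have hinv : ∀ x : A, affineOp g x '' S = S := by
      intro x
      apply Set.eq_of_subset_of_subset
      · rintro _ ⟨s, hs, rfl⟩
        exact hadd _ ⟨x, rfl⟩ _ (hg s hs)
      · intro s hs
        refine ⟨g.symm (s - (x - g x)), hginv _ (hsub _ hs _ ⟨x, rfl⟩), ?_⟩
        simp [affineOp]
    refine ⟨S, Sᶜ, ⟨0, hzero⟩, ⟨a, haS⟩, disjoint_compl_right, Set.union_compl_self S,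
      hinv, fun x => ?_⟩
    rw [Set.image_compl_eq (hbij x), hinv x]
  · rintro hs hd
    obtain ⟨Y, Z, ⟨y, hy⟩, ⟨z, hz⟩, hdisj, -, hYinv, -⟩ := hd
    obtain ⟨x, hx⟩ := hs (z - g y)
    have : affineOp g x y = z := by
      simp only at hx
      simp [affineOp, hx]
    have hzY : z ∈ Y := this ▸ (hYinv x ▸ Set.mem_image_of_mem _ hy)
    exact Set.disjoint_left.mp hdisj hzY hz
end

section
/- Let p be a prime and let F_{p^2} be the field with p^2 elements, with prime subfield F_p. For α, β ∈ F_{p^2} \ F_p, the affine quandles (F_{p^2}, α) and (F_{p^2}, β), with operations x ▷ y = (1−α)x + αy and x ▷ y = (1−β)x + βy respectively, are isomorphic as quandles if and only if β = α or β = α^p. -/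
open Polynomial

variable {R K L : Type*}

def affineQuandleOp [Ring K] (α x y : K) : K := (1 - α) * x + α * y

theorem isRackIso_affineQuandleOp_map [Ring K] [Ring L] (σ : K ≃+* L) (α : K) :
    IsRackIso (affineQuandleOp α) (affineQuandleOp (σ α)) :=
  ⟨σ.toEquiv, fun x y => by simp [affineQuandleOp]⟩

theorem IsRackIso.exists_injective_addMonoidHom_affineQuandleOp [Field K] [Ring L] {α : K} {β : L}
    (hα₀ : α ≠ 0) (hα₁ : α ≠ 1) (h : IsRackIso (affineQuandleOp α) (affineQuandleOp β)) :
    ∃ g : K →+ L, Function.Injective g ∧ ∀ x, g (α * x) = β * g x := by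
  obtain ⟨f, hf⟩ := h
  let g (x : K) : L := f x - f 0
  have hg₀ : g 0 = 0 := sub_self _
  have hg (x y : K) : g ((1 - α) * x + α * y) = (1 - β) * g x + β * g y := by
    show f (affineQuandleOp α x y) - f 0 = (1 - β) * (f x - f 0) + β * (f y - f 0)
    rw [hf]
    simp only [affineQuandleOp]
    noncomm_ring
  have hg_mul (x : K) : g (α * x) = β * g x := by simpa [hg₀] using hg 0 x
  have hg_mul_one_sub (x : K) : g ((1 - α) * x) = (1 - β) * g x := by simpa [hg₀] using hg x 0
  -- every sum is a quandle product: `x + y = (x / (1 - α)) ▷ (y / α)`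
  have hg_add (x y : K) : g (x + y) = g x + g y := by
    have h1α : 1 - α ≠ 0 := sub_ne_zero.2 hα₁.symm
    simpa only [mul_div_cancel₀ _ h1α, mul_div_cancel₀ _ hα₀, ← hg_mul, ← hg_mul_one_sub] using
      hg (x / (1 - α)) (y / α)
  exact ⟨.mk' g hg_add, fun x y hxy => f.injective (sub_left_injective hxy), hg_mul⟩

theorem LinearMap.map_aeval_mul [CommRing R] [CommRing K] [CommRing L] [Algebra R K]
    [Algebra R L] (g : K →ₗ[R] L) {α : K} {β : L} (h : ∀ x, g (α * x) = β * g x) (q : R[X])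
    (x : K) : g (aeval α q * x) = aeval β q * g x := by
  induction q using Polynomial.induction_on generalizing x with
  | C a => simp [← Algebra.smul_def]
  | add q r hq hr => simp [add_mul, hq, hr]
  | monomial n a ih =>
    rw [pow_succ, ← mul_assoc, map_mul (aeval α), map_mul (aeval β), aeval_X, aeval_X, mul_assoc,
      ih, h, mul_assoc]

theorem IsRackIso.aeval_minpoly_eq_zero (n : ℕ) [Field K] [Field L] [Algebra (ZMod n) K]
    [Algebra (ZMod n) L] {α : K} {β : L} (hα₀ : α ≠ 0) (hα₁ : α ≠ 1)
    (h : IsRackIso (affineQuandleOp α) (affineQuandleOp β)) :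
    aeval β (minpoly (ZMod n) α) = 0 := by
  obtain ⟨g, hg_inj, hg⟩ := h.exists_injective_addMonoidHom_affineQuandleOp hα₀ hα₁
  have hg₁ : g 1 ≠ 0 := (map_ne_zero_iff g hg_inj).2 one_ne_zero
  have := (g.toZModLinearMap n).map_aeval_mul hg (minpoly (ZMod n) α) 1
  simpa [hg₁] using this.symm

theorem isRackIso_affineQuandleOp_iff_exists_algEquiv (p : ℕ) [Fact p.Prime] [Field L]
    [Algebra (ZMod p) L] [Normal (ZMod p) L] {α β : L} (hα₀ : α ≠ 0) (hα₁ : α ≠ 1) :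
    IsRackIso (affineQuandleOp α) (affineQuandleOp β) ↔ ∃ σ : Gal(L/ZMod p), σ α = β := by
  constructor
  · intro h
    exact minpoly.exists_algEquiv_of_root' (Algebra.IsAlgebraic.isAlgebraic α)
      (h.aeval_minpoly_eq_zero p hα₀ hα₁)
  · rintro ⟨σ, rfl⟩
    exact isRackIso_affineQuandleOp_map σ.toRingEquiv α

theorem FiniteField.exists_algEquiv_apply_eq_iff [Field K] [Fintype K] [Field L] [Algebra K L]
    [Finite L] {α β : L} :
    (∃ σ : Gal(L/K), σ α = β) ↔ ∃ i < Module.finrank K L, α ^ Fintype.card K ^ i = β := by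
  have hfrob (i : ℕ) :
      ⇑(frobeniusAlgEquivOfAlgebraic K L ^ i) = (· ^ Fintype.card K ^ i) := by
    rw [AlgEquiv.coe_pow, coe_frobeniusAlgEquivOfAlgebraic_iterate]
  constructor
  · rintro ⟨σ, rfl⟩
    obtain ⟨⟨i, hi⟩, rfl⟩ := (bijective_frobeniusAlgEquivOfAlgebraic_pow K L).2 σ
    exact ⟨i, hi, (congrFun (hfrob i) α).symm⟩
  · rintro ⟨i, -, rfl⟩
    exact ⟨_, congrFun (hfrob i) α⟩

theorem affine_quandle_Fpsq_iso_iff_galois_conjugate_general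
    (p : ℕ) [hp : Fact p.Prime] (α β : GaloisField p 2)
    (hα : α ∉ Set.range (algebraMap (ZMod p) (GaloisField p 2))) :
    IsRackIso (fun x y : GaloisField p 2 => (1 - α) * x + α * y)
        (fun x y : GaloisField p 2 => (1 - β) * x + β * y) ↔
      β = α ∨ β = α ^ p := by
  have hα₀ : α ≠ 0 := fun h => hα ⟨0, by simp [h]⟩
  have hα₁ : α ≠ 1 := fun h => hα ⟨1, by simp [h]⟩
  refine (isRackIso_affineQuandleOp_iff_exists_algEquiv p hα₀ hα₁).trans ?_
  rw [FiniteField.exists_algEquiv_apply_eq_iff, GaloisField.finrank p two_ne_zero, ZMod.card]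
  constructor
  · rintro ⟨i, hi, rfl⟩
    interval_cases i <;> simp
  · rintro (rfl | rfl)
    exacts [⟨0, by simp⟩, ⟨1, by simp⟩]

/-- For `α, β ∈ F_{p^2} \ F_p`, the affine quandles `(F_{p^2}, α)`
and `(F_{p^2}, β)` are isomorphic if and only if `β = α` or `β = α^p`. -/
theorem affine_quandle_Fpsq_iso_iff_galois_conjugate
    (p : ℕ) [hp : Fact p.Prime] (α β : GaloisField p 2)
    (hα : α ∉ Set.range (algebraMap (ZMod p) (GaloisField p 2)))
    (hβ : β ∉ Set.range (algebraMap (ZMod p) (GaloisField p 2))) :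
    IsRackIso (fun x y : GaloisField p 2 => (1 - α) * x + α * y)
        (fun x y : GaloisField p 2 => (1 - β) * x + β * y) ↔
      β = α ∨ β = α ^ p :=
  affine_quandle_Fpsq_iso_iff_galois_conjugate_general p (hp := hp) α β hα
end

section
/- Let p be a prime and let α, β ∈ Z_{p^2} = Z/p^2Z be such that neither α nor β is congruent to 0 or 1 modulo p. Then the affine quandles on Z_{p^2} with operations x ▷ y = (1−α)x + αy and x ▷ y = (1−β)x + βy are isomorphic as quandles if and only if α = β. -/
/-!
For an isomorphism `f : (R, α) → (R, β)`, put `g x = f x - f 0`. Setting one argument to `0` shows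
that `g` turns multiplication by `α` into multiplication by `β`, and by `1 - α` into `1 - β`. When
`α` and `1 - α` are units every `u + v` has the form `(1 - α) a + α b`, so `g` is additive. On
`ZMod n` this makes `g` multiplication by `c = g 1`, a unit as `g` is onto, and `α c = g α = β c`.
-/

theorem affine_quandle_hom_sub_map_zero_add {R : Type*} [CommRing R] {α β : R} {f : R → R}
    (hα : IsUnit α) (hα' : IsUnit (1 - α))
    (hf : ∀ a b, f ((1 - α) * a + α * b) = (1 - β) * f a + β * f b) (u v : R) :
    f (u + v) - f 0 = (f u - f 0) + (f v - f 0) := by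
  obtain ⟨a, rfl⟩ : ∃ a, (1 - α) * a = u := ⟨↑hα'.unit⁻¹ * u, hα'.unit.mul_inv_cancel_left u⟩
  obtain ⟨b, rfl⟩ : ∃ b, α * b = v := ⟨↑hα.unit⁻¹ * v, hα.unit.mul_inv_cancel_left v⟩
  have hfa := hf a 0
  have hfb := hf 0 b
  simp only [mul_zero, add_zero, zero_add] at hfa hfb
  rw [hf, hfa, hfb]
  ring

theorem ZMod.eq_of_surjective_affine_quandle_hom {n : ℕ} {α β : ZMod n} {f : ZMod n → ZMod n}
    (hsurj : Function.Surjective f) (hα : IsUnit α) (hα' : IsUnit (1 - α))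
    (hf : ∀ a b, f ((1 - α) * a + α * b) = (1 - β) * f a + β * f b) : α = β := by
  let g : ZMod n →+ ZMod n :=
    AddMonoidHom.mk' (fun x => f x - f 0) (affine_quandle_hom_sub_map_zero_add hα hα' hf)
  have hg_apply : ∀ x, g x = x * g 1 := fun x => by
    simpa using ZMod.map_smul g x 1
  have hg_unit : IsUnit (g 1) := by
    obtain ⟨x, hx⟩ := hsurj (1 + f 0)
    refine IsUnit.of_mul_eq_one_right x ?_
    rw [← hg_apply]
    simp [g, hx]
  have hg_mul : g α = β * g 1 := by
    have hf01 := hf 0 1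
    simp only [mul_zero, zero_add, mul_one] at hf01
    simp only [g, AddMonoidHom.mk'_apply, hf01]
    ring
  exact hg_unit.mul_right_cancel (by rw [← hg_apply, hg_mul])

theorem ZMod.isUnit_of_castHom_prime_pow_ne_zero {p d : ℕ} (hp : p.Prime) (hd : d ≠ 0)
    {x : ZMod (p ^ d)} (hx : ZMod.castHom (dvd_pow_self p hd) (ZMod p) x ≠ 0) : IsUnit x := by
  have : NeZero (p ^ d) := ⟨pow_ne_zero d hp.ne_zero⟩
  obtain ⟨a, rfl⟩ := ZMod.natCast_zmod_surjective x
  rw [map_natCast, ne_eq, ZMod.natCast_eq_zero_iff] at hx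
  exact (ZMod.isUnit_natCast_iff_not_dvd_pow hp (Nat.pos_of_ne_zero hd)).mpr hx

/-- For `α, β ∈ Z_{p^2}` neither congruent to `0` nor `1` mod `p`,
the affine quandles `(Z_{p^2}, α)` and `(Z_{p^2}, β)` are isomorphic iff `α = β`. -/
theorem affine_quandle_Zpsq_iso_iff_eq
    (p : ℕ) (hp : p.Prime) (α β : ZMod (p ^ 2))
    (hα0 : ZMod.castHom (dvd_pow_self p (by norm_num : (2 : ℕ) ≠ 0)) (ZMod p) α ≠ 0)
    (hα1 : ZMod.castHom (dvd_pow_self p (by norm_num : (2 : ℕ) ≠ 0)) (ZMod p) α ≠ 1) :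
    IsRackIso (fun x y : ZMod (p ^ 2) => (1 - α) * x + α * y)
        (fun x y : ZMod (p ^ 2) => (1 - β) * x + β * y) ↔
      α = β := by
  refine ⟨fun ⟨f, hf⟩ => ?_, fun h => h ▸ ⟨Equiv.refl _, fun _ _ => rfl⟩⟩
  have hα'0 : ZMod.castHom (dvd_pow_self p two_ne_zero) (ZMod p) (1 - α) ≠ 0 := by
    rw [map_sub, map_one, sub_ne_zero]
    exact hα1.symm
  exact ZMod.eq_of_surjective_affine_quandle_hom f.surjective
    (ZMod.isUnit_of_castHom_prime_pow_ne_zero hp two_ne_zero hα0)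
    (ZMod.isUnit_of_castHom_prime_pow_ne_zero hp two_ne_zero hα'0) hf
end

section
/- Let X be a finite rack and define ι : X → X by ι(x) = φ_x^{-1}(x), i.e., ι(x) is the unique element with x ▷ ι(x) = x. Then ι is a bijection, and the operation x ▷^ι y := x ▷ ι(y) makes X a quandle (in particular x ▷^ι (y ▷^ι z) = (x ▷^ι y) ▷^ι (x ▷^ι z), each left translation of ▷^ι is bijective, and x ▷^ι x = x for all x). -/
/-- For a finite rack `X`, the map `ι` defined by
`x ▷ ι(x) = x` is a bijection, and the operation `x ▷^ι y = x ▷ ι(y)`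
makes `X` a quandle. -/
theorem associated_quandle_of_rack
    (X : Type) [Fintype X] (op : X → X → X) (hr : IsRack op)
    (ι : X → X) (hι : ∀ x, op x (ι x) = x) :
    Function.Bijective ι ∧ IsQuandle (fun x y => op x (ι y)) := by
  obtain ⟨hbij, hdist⟩ := hr
  have inj : ∀ x, Function.Injective (op x) := fun x => (hbij x).injective
  -- ι commutes with left translations
  have key1 : ∀ x y, ι (op x y) = op x (ι y) := by
    intro x y
    apply inj (op x y)
    rw [hι]
    rw [← hdist, hι]
  -- φ_{ι y} = φ_y
  have phi_iota : ∀ y c, op (ι y) c = op y c := by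
    intro y c
    apply inj y
    rw [hdist, hι]
  -- ι is surjective, hence bijective
  have hsurj : Function.Surjective ι := fun x => ⟨op x x, by rw [key1, hι]⟩
  have hιbij : Function.Bijective ι := ⟨Finite.injective_iff_surjective.mpr hsurj, hsurj⟩
  refine ⟨hιbij, ⟨⟨fun x => (hbij x).comp hιbij, ?_⟩, fun x => hι x⟩⟩
  intro x y z
  simp only
  rw [key1, key1, ← hdist, phi_iota, hdist]
end

section
/- Let X be a rack, S a set, and β : X × X → Sym(S) a nonabelian 2-cocycle, i.e., β(x, y ▷ z) ∘ β(y, z) = β(x ▷ y, x ▷ z) ∘ β(x, z) for all x, y, z ∈ X. Then the operation (x, s) ▷ (y, t) = (x ▷ y, β(x, y)(t)) makes the product X × S a rack, denoted X ×_β S. Moreover, if X is a quandle, then X ×_β S is a quandle if and only if β is a quandle cocycle, i.e., β(x, x) = id_S for all x ∈ X. -/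
/-- If `X` is a rack and `β : X × X → Sym(S)` is a nonabelian
2-cocycle, then `(x,s) ▷ (y,t) = (x ▷ y, β x y t)` makes `X × S` a rack.
Moreover, if `X` is a quandle, then `X ×_β S` is a quandle iff `β` is a quandle
cocycle, i.e. `β x x = 1` for all `x`. -/
theorem extension_rack_of_cocycle
    (X S : Type) (op : X → X → X) (hr : IsRack op)
    (β : X → X → Equiv.Perm S)
    (hβ : ∀ x y z : X, β x (op y z) * β y z = β (op x y) (op x z) * β x z) :
    IsRack (fun a b : X × S => (op a.1 b.1, β a.1 b.1 b.2)) ∧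
      (IsQuandle op →
        (IsQuandle (fun a b : X × S => (op a.1 b.1, β a.1 b.1 b.2)) ↔
          ∀ x : X, β x x = 1)) := by
  obtain ⟨hbij, hdist⟩ := hr
  have hrack : IsRack (fun a b : X × S => (op a.1 b.1, β a.1 b.1 b.2)) := by
    constructor
    · intro a
      constructor
      · rintro ⟨y, t⟩ ⟨y', t'⟩ h
        simp only [Prod.mk.injEq] at h
        obtain ⟨h1, h2⟩ := h
        have hy : y = y' := (hbij a.1).1 h1
        subst hy
        exact Prod.ext rfl ((β a.1 y).injective h2)
      · rintro ⟨y, t⟩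
        obtain ⟨y', hy'⟩ := (hbij a.1).2 y
        exact ⟨(y', (β a.1 y').symm t), by simp [hy']⟩
    · rintro ⟨x, s⟩ ⟨y, t⟩ ⟨z, u⟩
      simp only [Prod.mk.injEq]
      refine ⟨hdist x y z, ?_⟩
      have := congrFun (congrArg (fun e : Equiv.Perm S => (e : S → S)) (hβ x y z)) u
      simpa using this
  refine ⟨hrack, fun hq => ⟨fun hq' x => ?_, fun h => ⟨hrack, ?_⟩⟩⟩
  · ext s
    have := hq'.2 (x, s)
    simp only [Prod.mk.injEq] at this
    simpa using this.2
  · rintro ⟨x, s⟩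
    simp [hq.2 x, h x]
end

section
/- Let X be a rack, S a set, and let β, β' : X × X → Sym(S) be nonabelian 2-cocycles that are cohomologous, i.e., there exists γ : X → Sym(S) with β'(x, y) = γ(x ▷ y) ∘ β(x, y) ∘ γ(y)^{-1} for all x, y ∈ X. Then the extension racks X ×_β S and X ×_{β'} S, with operations (x,s) ▷ (y,t) = (x ▷ y, β(x,y)(t)) and (x,s) ▷ (y,t) = (x ▷ y, β'(x,y)(t)) respectively, are isomorphic as racks. -/
/-- Cohomologous nonabelian 2-cocycles `β, β' : X × X → Sym(S)`
give isomorphic extension racks `X ×_β S ≅ X ×_{β'} S`. -/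
theorem extension_racks_of_cohomologous_cocycles_iso
    (X S : Type) (op : X → X → X) (hr : IsRack op)
    (β β' : X → X → Equiv.Perm S)
    (hβ : ∀ x y z : X, β x (op y z) * β y z = β (op x y) (op x z) * β x z)
    (hβ' : ∀ x y z : X, β' x (op y z) * β' y z = β' (op x y) (op x z) * β' x z)
    (γ : X → Equiv.Perm S)
    (hγ : ∀ x y : X, β' x y = γ (op x y) * β x y * (γ y)⁻¹) :
    IsRackIso (fun a b : X × S => (op a.1 b.1, β a.1 b.1 b.2))
      (fun a b : X × S => (op a.1 b.1, β' a.1 b.1 b.2)) := by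
  refine ⟨Equiv.prodCongrRight (fun x => γ x), ?_⟩
  intro a b
  simp [Equiv.prodCongrRight, hγ]
end

section
/- Let p be an odd prime and let G = Z_{p^2} ⋊ C_p be the semidirect product of the cyclic group Z/p^2Z by the cyclic group C_p of order p with generator t, where t acts on Z_{p^2} by t a t^{-1} = (1+p)a (multiplication by 1+p, which is an automorphism of order p of Z/p^2Z). Then every automorphism α of G maps t to an element of the form (pc)t with c ∈ Z_{p^2}; i.e., writing elements of G as pairs (a, t^m), α(0, t) = (pc, t) for some c. -/
/-- Let `p` be an odd prime and `G = Z_{p^2} ⋊ C_p` the group of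
order `p^3` generated by an element `a` of order `p^2` and an element `t` of order
`p` with `t a t⁻¹ = a^{1+p}`. Then every automorphism `α` of `G` sends `t` to an
element of the form `a^{pc} t`, i.e. `(pc)t` in the notation of the paper. -/
theorem aut_of_Zpsq_semidirect_Cp_on_generator
    (p : ℕ) (hp : p.Prime) (hodd : Odd p)
    (G : Type) [Group G] [Fintype G] (hcard : Fintype.card G = p ^ 3)
    (a t : G) (ha : orderOf a = p ^ 2) (ht : orderOf t = p)
    (hgen : Subgroup.closure {a, t} = (⊤ : Subgroup G))
    (hrel : t * a * t⁻¹ = a ^ (1 + p))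
    (α : G ≃* G) :
    ∃ c : ℕ, α t = a ^ (p * c) * t := by
  have hppos : 0 < p := hp.pos
  have hpne : (p : ℤ) ≠ 0 := by exact_mod_cast hppos.ne'
  have hp2 : a ^ (p ^ 2) = 1 := by rw [← ha]; exact pow_orderOf_eq_one a
  have htp : t ^ p = 1 := by rw [← ht]; exact pow_orderOf_eq_one t
  -- basic commutation
  have hta : ∀ k : ℕ, t * a ^ k = a ^ (k * (1 + p)) * t := by
    intro k
    have h1 : SemiconjBy t a (a ^ (1 + p)) := by
      unfold SemiconjBy
      rw [← hrel]; group
    have h2 := h1.pow_right k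
    unfold SemiconjBy at h2
    rw [← pow_mul, mul_comm (1 + p) k] at h2
    exact h2
  have hcomm : ∀ m k : ℕ, t ^ m * a ^ k = a ^ (k * (1 + p) ^ m) * t ^ m := by
    intro m
    induction m with
    | zero => intro k; simp
    | succ m ih =>
      intro k
      have e : k * (1 + p) * (1 + p) ^ m = k * (1 + p) ^ (m + 1) := by ring
      calc t ^ (m + 1) * a ^ k = t ^ m * (t * a ^ k) := by rw [pow_succ]; group
        _ = t ^ m * (a ^ (k * (1 + p)) * t) := by rw [hta]
        _ = (t ^ m * a ^ (k * (1 + p))) * t := by group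
        _ = (a ^ (k * (1 + p) * (1 + p) ^ m) * t ^ m) * t := by rw [ih]
        _ = a ^ (k * (1 + p) ^ (m + 1)) * t ^ (m + 1) := by rw [e, mul_assoc, ← pow_succ]
  have hmul : ∀ i j k l : ℕ,
      (a ^ i * t ^ j) * (a ^ k * t ^ l) = a ^ (i + k * (1 + p) ^ j) * t ^ (j + l) := by
    intro i j k l
    calc (a ^ i * t ^ j) * (a ^ k * t ^ l) = a ^ i * (t ^ j * a ^ k) * t ^ l := by group
      _ = a ^ i * (a ^ (k * (1 + p) ^ j) * t ^ j) * t ^ l := by rw [hcomm]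
      _ = a ^ (i + k * (1 + p) ^ j) * t ^ (j + l) := by rw [pow_add, pow_add]; group
  -- normal form
  have key : ∀ g : G, ∃ i j : ℕ, g = a ^ i * t ^ j := by
    intro g
    have hg : g ∈ Subgroup.closure ({a, t} : Set G) := by rw [hgen]; exact Subgroup.mem_top g
    induction hg using Subgroup.closure_induction with
    | mem x hx =>
      rcases hx with rfl | rfl
      · exact ⟨1, 0, by simp⟩
      · exact ⟨0, 1, by simp⟩
    | one => exact ⟨0, 0, by simp⟩
    | mul x y hx hy ihx ihy =>
      obtain ⟨i, j, rfl⟩ := ihx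
      obtain ⟨k, l, rfl⟩ := ihy
      exact ⟨i + k * (1 + p) ^ j, j + l, hmul i j k l⟩
    | inv x hx ih =>
      obtain ⟨i, j, rfl⟩ := ih
      refine ⟨i * (p ^ 2 - 1) * (1 + p) ^ (j * (p - 1)), j * (p - 1), ?_⟩
      have hp1 : p - 1 + 1 = p := Nat.succ_pred_eq_of_pos hppos
      have hp21 : p ^ 2 - 1 + 1 = p ^ 2 := Nat.succ_pred_eq_of_pos (pow_pos hppos 2)
      have e1 : j + j * (p - 1) = p * j := by
        calc j + j * (p - 1) = j * ((p - 1) + 1) := by ring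
          _ = j * p := by rw [hp1]
          _ = p * j := by ring
      have e2 : i + i * (p ^ 2 - 1) = p ^ 2 * i := by
        calc i + i * (p ^ 2 - 1) = i * ((p ^ 2 - 1) + 1) := by ring
          _ = i * p ^ 2 := by rw [hp21]
          _ = p ^ 2 * i := by ring
      have h1 : (a ^ i * t ^ j) * (t ^ (j * (p - 1)) * a ^ (i * (p ^ 2 - 1))) = 1 := by
        calc (a ^ i * t ^ j) * (t ^ (j * (p - 1)) * a ^ (i * (p ^ 2 - 1)))
            = a ^ i * (t ^ j * t ^ (j * (p - 1))) * a ^ (i * (p ^ 2 - 1)) := by group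
          _ = a ^ i * t ^ (p * j) * a ^ (i * (p ^ 2 - 1)) := by rw [← pow_add, e1]
          _ = a ^ i * a ^ (i * (p ^ 2 - 1)) := by rw [pow_mul, htp, one_pow, mul_one]
          _ = a ^ (p ^ 2 * i) := by rw [← pow_add, e2]
          _ = 1 := by rw [pow_mul, hp2, one_pow]
      have h2 : (a ^ i * t ^ j)⁻¹ = t ^ (j * (p - 1)) * a ^ (i * (p ^ 2 - 1)) :=
        inv_eq_of_mul_eq_one_right h1
      rw [h2, hcomm]
  -- power formula
  have hpowf : ∀ r s n : ℕ,
      (a ^ r * t ^ s) ^ n = a ^ (r * ∑ m ∈ Finset.range n, (1 + p) ^ (m * s)) * t ^ (n * s) := by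
    intro r s n
    induction n with
    | zero => simp
    | succ n ih =>
      rw [pow_succ, ih, hmul, Finset.sum_range_succ]
      congr 1
      · congr 1; ring
      · congr 1; ring
  -- binomial congruence
  have hbin : ∀ m : ℕ, ∃ A : ℕ, (1 + p) ^ m = 1 + m * p + p ^ 2 * A := by
    intro m
    induction m with
    | zero => exact ⟨0, by simp⟩
    | succ m ih =>
      obtain ⟨A, hA⟩ := ih
      exact ⟨A + m + p * A, by rw [pow_succ, hA]; ring⟩
  have hsum : ∀ s n : ℕ, ∃ B : ℕ,
      ∑ m ∈ Finset.range n, (1 + p) ^ (m * s)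
        = n + p * s * (∑ m ∈ Finset.range n, m) + p ^ 2 * B := by
    intro s n
    induction n with
    | zero => exact ⟨0, by simp⟩
    | succ n ih =>
      obtain ⟨B, hB⟩ := ih
      obtain ⟨A, hA⟩ := hbin (n * s)
      refine ⟨B + A, ?_⟩
      rw [Finset.sum_range_succ, Finset.sum_range_succ, hB, hA]
      ring
  have hgauss : ∃ g : ℕ, ∑ m ∈ Finset.range p, m = p * g := by
    have h2 : (∑ m ∈ Finset.range p, m) * 2 = p * (p - 1) := Finset.sum_range_id_mul_two p
    have hd : p ∣ (∑ m ∈ Finset.range p, m) * 2 := h2 ▸ Dvd.intro _ rfl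
    have hcop : Nat.Coprime p 2 := by
      rw [Nat.Prime.coprime_iff_not_dvd hp]
      intro h
      have h5 := Nat.le_of_dvd (by norm_num) h
      have h3 := Nat.odd_iff.mp hodd
      have h4 := hp.two_le
      omega
    exact hcop.dvd_of_dvd_mul_right hd
  have hT : ∀ s : ℕ, ∃ C : ℕ,
      ∑ m ∈ Finset.range p, (1 + p) ^ (m * s) = p + p ^ 2 * C := by
    intro s
    obtain ⟨B, hB⟩ := hsum s p
    obtain ⟨g, hg⟩ := hgauss
    exact ⟨s * g + B, by rw [hB, hg]; ring⟩
  have hpow_p : ∀ r s : ℕ, ∃ C : ℕ,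
      (a ^ r * t ^ s) ^ p = a ^ (r * p + p ^ 2 * (r * C)) := by
    intro r s
    obtain ⟨C, hC⟩ := hT s
    refine ⟨C, ?_⟩
    rw [hpowf, hC, pow_mul t p s, htp, one_pow, mul_one]
    congr 1; ring
  -- orders of images
  have hou : orderOf (α t) = p := by
    rw [← ht]
    simpa using orderOf_injective α.toMonoidHom α.injective t
  have hob : orderOf (α a) = p ^ 2 := by
    rw [← ha]
    simpa using orderOf_injective α.toMonoidHom α.injective a
  obtain ⟨i, j, hij⟩ := key (α t)
  obtain ⟨r, s, hrs⟩ := key (α a)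
  -- p ∣ i
  obtain ⟨C, hC⟩ := hpow_p i j
  have hup : (α t) ^ p = 1 := by rw [← hou]; exact pow_orderOf_eq_one _
  have hdvd : p ^ 2 ∣ i * p + p ^ 2 * (i * C) := by
    have h1 : a ^ (i * p + p ^ 2 * (i * C)) = 1 := by rw [← hC, ← hij]; exact hup
    have h2 := orderOf_dvd_iff_pow_eq_one.mpr h1
    rwa [ha] at h2
  have hdvd2 : p ^ 2 ∣ i * p := by
    have h3 : p ^ 2 ∣ (i * p + p ^ 2 * (i * C)) - p ^ 2 * (i * C) :=
      Nat.dvd_sub hdvd (Dvd.intro _ rfl)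
    rwa [Nat.add_sub_cancel] at h3
  have hpi : p ∣ i := by
    have h : p * p ∣ i * p := by rwa [pow_two] at hdvd2
    exact (Nat.mul_dvd_mul_iff_right hppos).mp h
  obtain ⟨i', hi'⟩ := hpi
  -- p ∤ r
  obtain ⟨D, hD⟩ := hpow_p r s
  have hbp : (α a) ^ p ≠ 1 := by
    intro h
    have h4 : p ^ 2 ∣ p := by rw [← hob]; exact orderOf_dvd_iff_pow_eq_one.mpr h
    have h5 := Nat.le_of_dvd hppos h4
    have h6 := hp.two_le
    nlinarith
  have hpr : ¬ p ∣ r := by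
    rintro ⟨r', hr'⟩
    apply hbp
    rw [hrs, hD]
    have e : r * p + p ^ 2 * (r * D) = p ^ 2 * (r' + r * D) := by rw [hr']; ring
    rw [e, pow_mul, hp2, one_pow]
  -- relation transported by α
  have hrel2 : (α t) * (α a) = (α a) ^ (p + 1) * (α t) := by
    have h := congrArg (fun g => α g) hrel
    simp only [map_mul, map_inv, map_pow] at h
    calc α t * α a = (α t * α a * (α t)⁻¹) * α t := by group
      _ = (α a) ^ (1 + p) * α t := by rw [h]
      _ = (α a) ^ (p + 1) * α t := by rw [add_comm]
  -- compute both sides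
  have hL : (α t) * (α a) = a ^ (i + r * (1 + p) ^ j) * t ^ (j + s) := by
    rw [hij, hrs, hmul]
  have hR : (α a) ^ (p + 1) * (α t)
      = a ^ ((r * p + p ^ 2 * (r * D) + r) + (i * (1 + p) ^ s)) * t ^ (s + j) := by
    have h1 : (α a) ^ (p + 1) = a ^ (r * p + p ^ 2 * (r * D) + r) * t ^ s := by
      rw [pow_succ, hrs, hD, ← mul_assoc, ← pow_add]
    rw [h1, hij, hmul]
  have heq : a ^ (i + r * (1 + p) ^ j) * t ^ (j + s)
      = a ^ ((r * p + p ^ 2 * (r * D) + r) + (i * (1 + p) ^ s)) * t ^ (s + j) := by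
    rw [← hL, ← hR, hrel2]
  rw [add_comm s j] at heq
  have heq2 : a ^ (i + r * (1 + p) ^ j)
      = a ^ ((r * p + p ^ 2 * (r * D) + r) + (i * (1 + p) ^ s)) :=
    mul_right_cancel heq
  have hmod : (i + r * (1 + p) ^ j)
      ≡ ((r * p + p ^ 2 * (r * D) + r) + (i * (1 + p) ^ s)) [MOD p ^ 2] := by
    have h := pow_eq_pow_iff_modEq.mp heq2
    rwa [ha] at h
  obtain ⟨Aj, hAj⟩ := hbin j
  obtain ⟨As, hAs⟩ := hbin s
  have hdInt : ((p : ℤ)) ^ 2 ∣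
      (((r * p + p ^ 2 * (r * D) + r) + (i * (1 + p) ^ s) : ℕ) : ℤ)
        - ((i + r * (1 + p) ^ j : ℕ) : ℤ) := by
    have := Nat.modEq_iff_dvd.mp hmod
    push_cast at this ⊢
    convert this using 2 <;> push_cast <;> ring
  have hkey : (p : ℤ) ∣ (r : ℤ) * (1 - (j : ℤ)) := by
    obtain ⟨K, hK⟩ := hdInt
    have hexp : (p : ℤ) * ((r : ℤ) * (1 - (j : ℤ)))
        = (p : ℤ) ^ 2 * (K - ((r : ℤ) * D + (i' : ℤ) * s + (p : ℤ) * i' * As - (r : ℤ) * Aj)) := by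
      have hK' := hK
      rw [show (i : ℕ) = p * i' from hi'] at hK'
      push_cast [hAj, hAs] at hK'
      push_cast
      linear_combination hK'
    have : (p : ℤ) * ((r : ℤ) * (1 - (j : ℤ)))
        = (p : ℤ) * ((p : ℤ) * (K - ((r : ℤ) * D + (i' : ℤ) * s + (p : ℤ) * i' * As - (r : ℤ) * Aj))) := by
      rw [hexp]; ring
    have h7 := mul_left_cancel₀ hpne this
    exact ⟨_, h7⟩
  have hj1 : (p : ℤ) ∣ (1 : ℤ) - (j : ℤ) := by
    rcases (Int.Prime.dvd_mul' hp hkey) with h | h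
    · exact absurd (Int.natCast_dvd_natCast.mp h) hpr
    · exact h
  have hjmod : j ≡ 1 [MOD p] := by
    apply Nat.modEq_iff_dvd.mpr
    simpa using hj1
  have htj : t ^ j = t := by
    have : t ^ j = t ^ 1 := by
      apply pow_eq_pow_iff_modEq.mpr
      rwa [ht]
    simpa using this
  exact ⟨i', by rw [hij, hi', htj]⟩
end
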